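/- Let a₁, …, aₙ₊₁ be integers and let d_m = det(trig(a₁,…,a_m)) for 0 ≤ m ≤ n+1 (with d₀ = 1). If d_{n+1} = 0, then d_n = 1 or d_n = -1. -/
import Mathlib

def Ttri (a : ℕ → ℤ) (m : ℕ) : Matrix (Fin m) (Fin m) ℤ :=
  Matrix.of fun i j => if i = j then a (i.val + 1)
    else if i.val + 1 = j.val ∨ j.val + 1 = i.val then 1 else 0

lemma Ttri_sub (a : ℕ → ℤ) (m : ℕ) :
    (Ttri a (m+1)).submatrix Fin.castSucc Fin.castSucc = Ttri a m := by
  ext i j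
  simp [Ttri, Fin.castSucc_inj]

lemma minor_det (a : ℕ → ℤ) (m : ℕ) :
    ((Ttri a (m+2)).submatrix (Fin.last (m+1)).succAbove
      ((Fin.last m).castSucc).succAbove).det = (Ttri a m).det := by
  set N := (Ttri a (m+2)).submatrix (Fin.last (m+1)).succAbove
      ((Fin.last m).castSucc).succAbove with hN
  rw [Matrix.det_succ_column N (Fin.last m), Fin.sum_univ_castSucc]
  have hcol : ((Fin.last m).castSucc : Fin (m+2)).succAbove (Fin.last m)
      = Fin.last (m+1) := by
    rw [Fin.succAbove_of_le_castSucc]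
    · rfl
    · simp [Fin.le_def]
  have hz : ∀ i : Fin m, N i.castSucc (Fin.last m) = 0 := by
    intro i
    have := i.isLt
    simp only [hN, Matrix.submatrix_apply, Fin.succAbove_last, hcol]
    simp only [Ttri, Matrix.of_apply, Fin.ext_iff, Fin.val_last, Fin.coe_castSucc, true_or, or_true, if_true]
    split_ifs <;> omega
  have hsum0 : ∑ i : Fin m,
      (-1:ℤ) ^ ((i.castSucc : Fin (m+1)).val + (Fin.last m).val) *
        N i.castSucc (Fin.last m) *
        (N.submatrix i.castSucc.succAbove (Fin.last m).succAbove).det = 0 := by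
    apply Finset.sum_eq_zero
    intro i _
    rw [hz i]; ring
  rw [hsum0, zero_add]
  have hentry : N (Fin.last m) (Fin.last m) = 1 := by
    simp only [hN, Matrix.submatrix_apply, Fin.succAbove_last, hcol]
    simp only [Ttri, Matrix.of_apply, Fin.ext_iff, Fin.val_last, Fin.coe_castSucc, true_or, or_true, if_true]
    split_ifs <;> omega
  have hminor : N.submatrix (Fin.last m).succAbove (Fin.last m).succAbove
      = Ttri a m := by
    ext i k
    have hi := i.isLt
    have hk := k.isLt
    simp only [hN, Matrix.submatrix_apply, Fin.succAbove_last]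
    have hc : ((Fin.last m).castSucc : Fin (m+2)).succAbove k.castSucc
        = k.castSucc.castSucc := by
      rw [Fin.succAbove_of_castSucc_lt]
      simp [Fin.lt_def]
    rw [hc]
    simp [Ttri, Fin.castSucc_inj]
  rw [hentry, hminor]
  have hsgn : (-1:ℤ) ^ ((Fin.last m : Fin (m+1)).val + (Fin.last m).val) = 1 := by
    simpa [Fin.val_last] using Even.neg_one_pow (α := ℤ) ⟨m, by ring⟩
  rw [hsgn]; ring

lemma trig_rec (a : ℕ → ℤ) (m : ℕ) :
    (Ttri a (m+2)).det = a (m+2) * (Ttri a (m+1)).det - (Ttri a m).det := by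
  rw [Matrix.det_succ_row (Ttri a (m+2)) (Fin.last (m+1))]
  rw [Fin.sum_univ_castSucc, Fin.sum_univ_castSucc]
  have hz : ∀ j : Fin m,
      Ttri a (m+2) (Fin.last (m+1)) (j.castSucc.castSucc) = 0 := by
    intro j
    have := j.isLt
    simp only [Ttri, Matrix.of_apply, Fin.ext_iff, Fin.val_last, Fin.coe_castSucc, true_or, or_true, if_true]
    split_ifs <;> omega
  have hsum0 : ∑ j : Fin m,
      (-1:ℤ) ^ ((Fin.last (m+1) : Fin (m+2)).val + (j.castSucc.castSucc).val) *
        Ttri a (m+2) (Fin.last (m+1)) (j.castSucc.castSucc) *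
        ((Ttri a (m+2)).submatrix (Fin.last (m+1)).succAbove
          (j.castSucc.castSucc).succAbove).det = 0 := by
    apply Finset.sum_eq_zero
    intro j _
    rw [hz j]; ring
  rw [hsum0, zero_add]
  have h1 : Ttri a (m+2) (Fin.last (m+1)) ((Fin.last m).castSucc) = 1 := by
    simp only [Ttri, Matrix.of_apply, Fin.ext_iff, Fin.val_last, Fin.coe_castSucc, true_or, or_true, if_true]
    split_ifs <;> omega
  have h2 : Ttri a (m+2) (Fin.last (m+1)) (Fin.last (m+1)) = a (m+2) := by
    simp [Ttri]
  have h3 : ((Ttri a (m+2)).submatrix (Fin.last (m+1)).succAbove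
      (Fin.last (m+1)).succAbove).det = (Ttri a (m+1)).det := by
    rw [Fin.succAbove_last, Ttri_sub]
  rw [h1, h2, h3, minor_det]
  have e1 : (-1:ℤ) ^ ((Fin.last (m+1) : Fin (m+2)).val + ((Fin.last m).castSucc : Fin (m+2)).val) = -1 := by
    simp only [Fin.val_last, Fin.coe_castSucc]
    have h : (-1:ℤ) ^ (m + 1 + m) = ((-1)^2)^m * (-1) := by
      rw [← pow_mul]
      have : m + 1 + m = 2*m + 1 := by omega
      rw [this, pow_succ]
    rw [h]; norm_num
  have e2 : (-1:ℤ) ^ ((Fin.last (m+1) : Fin (m+2)).val + (Fin.last (m+1) : Fin (m+2)).val) = 1 := by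
    simpa [Fin.val_last] using Even.neg_one_pow (α := ℤ) ⟨m+1, by ring⟩
  rw [e1, e2]; ring

/-- if d_m = det(trig(a₁,…,a_m)) over ℤ with d₀ = 1 and
d_{n+1} = 0, then d_n = ±1. -/
theorem tridiagonal_det_penultimate_unit
    (n : ℕ) (a : ℕ → ℤ) (d : ℕ → ℤ)
    (hd0 : d 0 = 1)
    (hd : ∀ m : ℕ, 1 ≤ m → m ≤ n + 1 →
      d m = Matrix.det (Matrix.of fun i j : Fin m =>
        if i = j then a (i.val + 1)
        else if i.val + 1 = j.val ∨ j.val + 1 = i.val then 1 else 0))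
    (hzero : d (n + 1) = 0) :
    d n = 1 ∨ d n = -1 := by
  have hdT : ∀ m : ℕ, m ≤ n + 1 → d m = (Ttri a m).det := by
    intro m h1 
    rcases Nat.eq_zero_or_pos m with rfl | hm
    · rw [hd0]
      simp [Ttri, Matrix.det_fin_zero]
    · exact hd m hm h1
  have key : ∀ m : ℕ, m ≤ n → IsCoprime (d m) (d (m + 1)) := by
    intro m
    induction m with
    | zero => intro _; rw [hd0]; exact isCoprime_one_left
    | succ k ih =>
      intro hk
      have hrec : d (k + 2) = a (k + 2) * d (k + 1) - d k := by
        rw [hdT (k+2) (by omega), hdT (k+1) (by omega), hdT k (by omega)]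
        exact trig_rec a k
      have hco : IsCoprime (d k) (d (k + 1)) := ih (by omega)
      have : IsCoprime (d (k + 1)) (-(d k) + d (k + 1) * a (k + 2)) :=
        (hco.symm.neg_right).add_mul_left_right _
      have heq : -(d k) + d (k + 1) * a (k + 2) = d (k + 2) := by rw [hrec]; ring
      rwa [heq] at this
  rcases Nat.eq_zero_or_pos n with rfl | hn
  · rw [hd0]; left; rfl
  · have := key n (le_refl n)
    rw [hzero] at this
    have hu : IsUnit (d n) := isCoprime_zero_right.mp this
    exact Int.isUnit_iff.mp hu
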